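/- Fix a real number b > 1 and an integer t ≥ 0, and let (C_n) be a bounded sequence of reals such that α_C(n) := 2 log_b n + (t−2) log_b log_b n − C_n is a positive integer, and set r := ⌊n/α_C(n)⌋. For an r-tuple (k_1,…,k_r) of positive integers define h(k_1,…,k_r) := −Σ_{i=1}^r ( k_i^2/2 − (t/2)·k_i·log_b k_i ). Then for all sufficiently large n: if k_1 ≤ k_2 ≤ … ≤ k_r are positive integers with Σ_i k_i = n, k_1 ≤ α_C(n), k_r ≥ α_C(n)+1, and k_1 < k_r − 1, then h(k_1+1, k_2, …, k_{r−1}, k_r−1) > h(k_1, k_2, …, k_r). -/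

import Mathlib

open Filter

/-- `h(k_1,…,k_r) = −Σ_i (k_i²/2 − (t/2)·k_i·log_b k_i)`. -/
noncomputable def hfun (b : ℝ) (t : ℕ) {r : ℕ} (k : Fin r → ℕ) : ℝ :=
  -∑ i, ((k i : ℝ) ^ 2 / 2 - (t : ℝ) / 2 * (k i : ℝ) * Real.logb b (k i))

noncomputable def Gf (b : ℝ) (t : ℕ) (m : ℕ) : ℝ :=
  (m : ℝ) ^ 2 / 2 - (t : ℝ) / 2 * (m : ℝ) * Real.logb b (m : ℝ)

lemma hfun_eq_sum_Gf (b : ℝ) (t : ℕ) {r : ℕ} (k : Fin r → ℕ) :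
    hfun b t k = -∑ i, Gf b t (k i) := rfl

lemma sum_upd {r : ℕ} (G : ℕ → ℝ) (k : Fin r → ℕ) (i j : Fin r) (hij : i ≠ j)
    (av cv : ℕ) :
    ∑ x, G (Function.update (Function.update k i av) j cv x)
      = (∑ x, G (k x)) - G (k i) - G (k j) + G av + G cv := by
  classical
  have e1 : ∀ (g : Fin r → ℕ) (p : Fin r) (v : ℕ),
      (fun x => G (Function.update g p v x)) = Function.update (fun x => G (g x)) p (G v) := by
    intro g p v
    exact Function.comp_update G g p v
  rw [e1, Finset.sum_update_of_mem (Finset.mem_univ j)]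
  have hi : i ∈ Finset.univ \ {j} := by simp [hij]
  rw [e1, Finset.sum_update_of_mem hi]
  have hi' : i ∈ (Finset.univ : Finset (Fin r)).erase j := by simp [hij]
  have h2 : ∑ x, G (k x) = G (k j) + (G (k i) + ∑ x ∈ (Finset.univ \ {j}) \ {i}, G (k x)) := by
    rw [Finset.sdiff_singleton_eq_erase, Finset.sdiff_singleton_eq_erase,
      Finset.add_sum_erase _ (fun x => G (k x)) hi',
      Finset.add_sum_erase _ (fun x => G (k x)) (Finset.mem_univ j)]
  rw [h2]; ring

lemma tendsto_sub_log (c : ℝ) : Tendsto (fun x : ℝ => x - c * Real.log x) atTop atTop := by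
  have h := (Real.isLittleO_log_id_atTop.const_mul_left c).def (by norm_num : (0:ℝ) < 1/2)
  have h2 : ∀ᶠ x : ℝ in atTop, x / 2 ≤ x - c * Real.log x := by
    filter_upwards [h, eventually_ge_atTop (0:ℝ)] with x hx hx0
    rw [Real.norm_eq_abs, id, Real.norm_eq_abs, abs_of_nonneg hx0] at hx
    have := abs_le.mp hx
    linarith [this.1, this.2]
  exact tendsto_atTop_mono' _ h2 (tendsto_id.atTop_div_const (by norm_num))

lemma key (b : ℝ) (hb : 1 < b) (t : ℕ) (A B : ℝ) (hA : 1 ≤ A) (hAB : A + 2 ≤ B)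
    (hNB : (t:ℝ)/2 * Real.logb b B + ((t:ℝ)/Real.log b + 1 + (t:ℝ)/(4*Real.log b)) < B) :
    (A+1)^2/2 - (t:ℝ)/2*(A+1)*Real.logb b (A+1) + ((B-1)^2/2 - (t:ℝ)/2*(B-1)*Real.logb b (B-1))
      < A^2/2 - (t:ℝ)/2*A*Real.logb b A + (B^2/2 - (t:ℝ)/2*B*Real.logb b B) := by
  have hLb : 0 < Real.log b := Real.log_pos hb
  have hLb' : Real.log b ≠ 0 := ne_of_gt hLb
  have ht0 : (0:ℝ) ≤ t := Nat.cast_nonneg t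
  have hA0 : (0:ℝ) < A := by linarith
  have hA1 : (0:ℝ) < A + 1 := by linarith
  have hB0 : (0:ℝ) < B - 1 := by linarith
  have hB1 : (0:ℝ) < B := by linarith
  have hup : B * Real.log B - (B-1) * Real.log (B-1) ≤ Real.log B + 1 := by
    have h1 : Real.log (B/(B-1)) ≤ B/(B-1) - 1 := Real.log_le_sub_one_of_pos (by positivity)
    rw [Real.log_div (ne_of_gt hB1) (ne_of_gt hB0)] at h1
    have h2 : B/(B-1) - 1 = 1/(B-1) := by field_simp; ring
    rw [h2] at h1
    have h3 : (B-1) * (Real.log B - Real.log (B-1)) ≤ (B-1) * (1/(B-1)) :=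
      mul_le_mul_of_nonneg_left h1 (le_of_lt hB0)
    have h4 : (B-1) * (1/(B-1)) = 1 := by field_simp
    nlinarith [h3]
  have hlow : Real.log (A+1) + 1 - 1/(A+1) ≤ (A+1) * Real.log (A+1) - A * Real.log A := by
    have h1 : Real.log (A/(A+1)) ≤ A/(A+1) - 1 := Real.log_le_sub_one_of_pos (by positivity)
    rw [Real.log_div (ne_of_gt hA0) (ne_of_gt hA1)] at h1
    have h2 : A/(A+1) - 1 = -(1/(A+1)) := by field_simp; ring
    rw [h2] at h1
    have h3 : A * (1/(A+1)) ≤ A * (Real.log (A+1) - Real.log A) := by nlinarith [h1]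
    have h4 : A * (1/(A+1)) = 1 - 1/(A+1) := by field_simp; ring
    nlinarith [h3]
  have main : (t:ℝ)/2 * ((B * Real.log B - (B-1) * Real.log (B-1))
      - ((A+1) * Real.log (A+1) - A * Real.log A)) < (B - A - 1) * Real.log b := by
    have hd1 : (1:ℝ) ≤ B - A - 1 := by linarith
    have hdiff : (B * Real.log B - (B-1) * Real.log (B-1))
        - ((A+1) * Real.log (A+1) - A * Real.log A)
        ≤ Real.log B - Real.log (A+1) + 1/(A+1) := by linarith
    rcases le_or_gt (t:ℝ) (A * Real.log b) with hc | hc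
    · have h1 : Real.log (B/(A+1)) ≤ B/(A+1) - 1 := Real.log_le_sub_one_of_pos (by positivity)
      rw [Real.log_div (ne_of_gt hB1) (ne_of_gt hA1)] at h1
      have h2 : B/(A+1) - 1 = (B - A - 1)/(A+1) := by field_simp; ring
      rw [h2] at h1
      have hd2 : (t:ℝ)/2 * (Real.log B - Real.log (A+1) + 1/(A+1)) < (B - A - 1) * Real.log b := by
        have hup2 : (t:ℝ)/2 * (Real.log B - Real.log (A+1) + 1/(A+1))
            ≤ (t:ℝ)/2 * ((B - A - 1)/(A+1) + 1/(A+1)) := by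
          apply mul_le_mul_of_nonneg_left _ (by positivity)
          linarith
        have e : (t:ℝ)/2 * ((B - A - 1)/(A+1) + 1/(A+1)) = ((t:ℝ)*(B - A))/(2*(A+1)) := by
          field_simp; ring
        have hq : ((t:ℝ)*(B - A))/(2*(A+1)) < (B - A - 1) * Real.log b := by
          rw [div_lt_iff₀ (by positivity)]
          nlinarith [mul_le_mul_of_nonneg_right hc (show (0:ℝ) ≤ B - A by linarith),
            mul_nonneg (mul_nonneg hLb.le hA0.le) (show (0:ℝ) ≤ B - A - 2 by linarith),
            mul_pos hLb (show (0:ℝ) < B - A - 1 by linarith)]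
        calc (t:ℝ)/2 * (Real.log B - Real.log (A+1) + 1/(A+1))
            ≤ (t:ℝ)/2 * ((B - A - 1)/(A+1) + 1/(A+1)) := hup2
          _ = ((t:ℝ)*(B - A))/(2*(A+1)) := e
          _ < _ := hq
      calc (t:ℝ)/2 * _ ≤ (t:ℝ)/2 * (Real.log B - Real.log (A+1) + 1/(A+1)) :=
            mul_le_mul_of_nonneg_left hdiff (by positivity)
        _ < _ := hd2
    · have hlA : (0:ℝ) ≤ Real.log (A+1) := Real.log_nonneg (by linarith)
      have hfrac : 1/(A+1) ≤ 1/2 := by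
        rw [div_le_div_iff₀ hA1 (by norm_num)]; linarith
      have hNB' : (t:ℝ)/2 * Real.log B + (t:ℝ) + Real.log b + (t:ℝ)/4 < B * Real.log b := by
        have h := mul_lt_mul_of_pos_right hNB hLb
        rw [Real.logb] at h
        have e : ((t:ℝ)/2 * (Real.log B / Real.log b)
            + ((t:ℝ)/Real.log b + 1 + (t:ℝ)/(4*Real.log b))) * Real.log b
            = (t:ℝ)/2*Real.log B + (t:ℝ) + Real.log b + (t:ℝ)/4 := by
          field_simp; ring
        rw [e] at h
        exact h
      have hstep : (t:ℝ)/2 * (Real.log B - Real.log (A+1) + 1/(A+1))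
          ≤ (t:ℝ)/2 * Real.log B + (t:ℝ)/4 := by
        nlinarith [mul_nonneg ht0 hlA, mul_le_mul_of_nonneg_left hfrac ht0]
      have hend : (t:ℝ)/2 * Real.log B + (t:ℝ)/4 < (B - A - 1) * Real.log b := by
        linarith [hNB', hc]
      calc (t:ℝ)/2 * _ ≤ (t:ℝ)/2 * (Real.log B - Real.log (A+1) + 1/(A+1)) :=
            mul_le_mul_of_nonneg_left hdiff (by positivity)
        _ ≤ _ := hstep
        _ < _ := hend
  have main2 : (t:ℝ)/2 * ((B * Real.log B - (B-1) * Real.log (B-1))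
      - ((A+1) * Real.log (A+1) - A * Real.log A)) / Real.log b < B - A - 1 := by
    rw [div_lt_iff₀ hLb]; linarith [main]
  have expand : A^2/2 - (t:ℝ)/2*A*(Real.log A/Real.log b)
      + (B^2/2 - (t:ℝ)/2*B*(Real.log B/Real.log b))
      - ((A+1)^2/2 - (t:ℝ)/2*(A+1)*(Real.log (A+1)/Real.log b)
        + ((B-1)^2/2 - (t:ℝ)/2*(B-1)*(Real.log (B-1)/Real.log b)))
      = (B - A - 1) - (t:ℝ)/2 * ((B * Real.log B - (B-1) * Real.log (B-1))
      - ((A+1) * Real.log (A+1) - A * Real.log A)) / Real.log b := by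
    ring
  simp only [Real.logb]
  linarith [main2, expand]

theorem stmt18 (b : ℝ) (hb : 1 < b) (t : ℕ) (C : ℕ → ℝ)
    (hC : ∃ M : ℝ, ∀ n : ℕ, |C n| ≤ M)
    (a : ℕ → ℕ)
    (ha : ∀ n : ℕ, 0 < a n ∧
      (a n : ℝ) = 2 * Real.logb b n
        + ((t : ℝ) - 2) * Real.logb b (Real.logb b n) - C n) :
    ∀ᶠ n : ℕ in atTop,
      ∀ (hr : 0 < n / a n) (k : Fin (n / a n) → ℕ),
        Monotone k → (∀ i, 1 ≤ k i) → (∑ i, k i = n) →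
        k ⟨0, hr⟩ ≤ a n → a n + 1 ≤ k ⟨n / a n - 1, Nat.sub_lt hr one_pos⟩ →
        k ⟨0, hr⟩ + 1 < k ⟨n / a n - 1, Nat.sub_lt hr one_pos⟩ →
        hfun b t k <
          hfun b t (Function.update
            (Function.update k ⟨0, hr⟩ (k ⟨0, hr⟩ + 1))
            ⟨n / a n - 1, Nat.sub_lt hr one_pos⟩
            (k ⟨n / a n - 1, Nat.sub_lt hr one_pos⟩ - 1)) := by
  obtain ⟨M, hM⟩ := hC
  have hLb : 0 < Real.log b := Real.log_pos hb
  set c0 : ℝ := (t:ℝ)/Real.log b + 1 + (t:ℝ)/(4*Real.log b) with hc0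
  obtain ⟨N, hN⟩ := eventually_atTop.mp
    ((tendsto_sub_log ((t:ℝ)/(2*Real.log b))).eventually_ge_atTop (c0 + 1))
  have hNprop : ∀ x : ℝ, N ≤ x → (t:ℝ)/2 * Real.logb b x + c0 < x := by
    intro x hx
    have h := hN x hx
    have e : (t:ℝ)/(2*Real.log b) * Real.log x = (t:ℝ)/2 * Real.logb b x := by
      rw [Real.logb]; ring
    rw [e] at h
    linarith
  have hlogn : Tendsto (fun n : ℕ => Real.logb b n) atTop atTop :=
    (Real.tendsto_logb_atTop hb).comp tendsto_natCast_atTop_atTop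
  have hg : Tendsto (fun x : ℝ => 2*(x - 1/Real.log b * Real.log x) + (-M)) atTop atTop :=
    tendsto_atTop_add_const_right _ _
      ((tendsto_sub_log (1/Real.log b)).const_mul_atTop (by norm_num : (0:ℝ) < 2))
  have hgn : Tendsto (fun n : ℕ =>
      2*(Real.logb b n - 1/Real.log b * Real.log (Real.logb b n)) + (-M)) atTop atTop :=
    hg.comp hlogn
  have hEvent : ∀ᶠ n : ℕ in atTop, N ≤ (a n : ℝ) := by
    filter_upwards [hgn.eventually_ge_atTop N, hlogn.eventually_ge_atTop 1] with n h1 h2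
    have ha2 := (ha n).2
    have hy : 0 ≤ Real.logb b (Real.logb b n) := Real.logb_nonneg hb h2
    have hcoef : -2 * Real.logb b (Real.logb b n) ≤ ((t:ℝ) - 2) * Real.logb b (Real.logb b n) := by
      nlinarith [hy, (Nat.cast_nonneg t : (0:ℝ) ≤ (t:ℝ))]
    have hCn := abs_le.mp (hM n)
    have e : 2*(Real.logb b n - 1/Real.log b * Real.log (Real.logb b n)) + (-M)
        = 2*Real.logb b n - 2*Real.logb b (Real.logb b n) - M := by
      simp only [Real.logb]; ring
    rw [e] at h1
    linarith [h1, hCn.2, hcoef, ha2.ge, ha2.le]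
  filter_upwards [hEvent] with n hn
  intro hr k hmono hpos hsum hA hB hAB
  set i0 : Fin (n / a n) := ⟨0, hr⟩ with hi0
  set iR : Fin (n / a n) := ⟨n / a n - 1, Nat.sub_lt hr one_pos⟩ with hiR
  have hij : i0 ≠ iR := by
    intro h
    rw [h] at hAB
    omega
  have hupd : hfun b t (Function.update (Function.update k i0 (k i0 + 1)) iR (k iR - 1))
      = hfun b t k + (Gf b t (k i0) + Gf b t (k iR)
        - Gf b t (k i0 + 1) - Gf b t (k iR - 1)) := by
    rw [hfun_eq_sum_Gf, hfun_eq_sum_Gf, sum_upd (Gf b t) k i0 iR hij]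
    ring
  rw [hupd]
  have hA1 : (1:ℝ) ≤ (k i0 : ℝ) := by exact_mod_cast hpos i0
  have hAB' : (k i0 : ℝ) + 2 ≤ (k iR : ℝ) := by
    have : k i0 + 2 ≤ k iR := by omega
    exact_mod_cast this
  have hBN : N ≤ (k iR : ℝ) := by
    have h1 : (a n : ℝ) + 1 ≤ (k iR : ℝ) := by exact_mod_cast hB
    linarith
  have hkey := key b hb t (k i0) (k iR) hA1 hAB' (hNprop _ hBN)
  have castA : ((k i0 + 1 : ℕ) : ℝ) = (k i0 : ℝ) + 1 := by push_cast; ring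
  have castB : ((k iR - 1 : ℕ) : ℝ) = (k iR : ℝ) - 1 := by
    have h1 : 1 ≤ k iR := by omega
    push_cast [h1]
    ring
  have hkey2 : Gf b t (k i0 + 1) + Gf b t (k iR - 1) < Gf b t (k i0) + Gf b t (k iR) := by
    simp only [Gf, castA, castB]
    linarith [hkey]
  linarith [hkey2]
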